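/- Let n ≥ 2 and let c be the (n+1)×(n+1) matrix over the polynomial ring ℤ[X], with rows and columns indexed by ℤ/(n+1)ℤ, defined by c_{i,j} = 1 if j = i + 1 or j = i − 1 (mod n+1), and c_{i,j} = 0 otherwise. Then det( 1 − X·c + X²·1 ) = (1 − X^{n+1})² in ℤ[X], where 1 denotes the identity (n+1)×(n+1) matrix. -/

import Mathlib

open Polynomial Matrix

private lemma perm_char18 (n : ℕ) (h1 : (1 : ZMod (n + 1)) ≠ 0)
    (σ : Equiv.Perm (ZMod (n + 1)))
    (h : ∀ i, σ i = i ∨ σ i = i + 1) : σ = 1 ∨ σ = Equiv.addRight 1 := by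
  by_cases hid : ∀ i, σ i = i
  · left; ext i; simp [hid i]
  · right
    push_neg at hid
    obtain ⟨i₀, hi₀⟩ := hid
    have hbase : σ i₀ = i₀ + 1 := (h i₀).resolve_left hi₀
    have hstep : ∀ j, σ j = j + 1 → σ (j + 1) = (j + 1) + 1 := by
      intro j hj
      rcases h (j + 1) with h' | h'
      · exfalso
        have hinj : j = j + 1 := σ.injective (hj.trans h'.symm)
        exact h1 (left_eq_add.mp hinj)
      · exact h'
    have hall : ∀ k : ℕ, σ (i₀ + (k : ZMod (n + 1))) = (i₀ + (k : ZMod (n + 1))) + 1 := by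
      intro k
      induction k with
      | zero => simpa using hbase
      | succ k ih =>
        have hcast : (((k + 1 : ℕ)) : ZMod (n + 1)) = (k : ZMod (n + 1)) + 1 := by push_cast; ring
        rw [hcast, ← add_assoc]
        exact hstep _ ih
    ext j
    obtain ⟨k, hk⟩ : ∃ k : ℕ, j = i₀ + (k : ZMod (n + 1)) :=
      ⟨(j - i₀).val, by rw [ZMod.natCast_rightInverse (j - i₀)]; ring⟩
    rw [hk]
    simpa using hall k

private lemma det_aux18 (n : ℕ) (hn : 2 ≤ n) :
    ((1 : Matrix (ZMod (n + 1)) (ZMod (n + 1)) (Polynomial ℤ))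
        - (X : Polynomial ℤ) • (Matrix.of fun i j : ZMod (n + 1) =>
            if j = i - 1 then (1 : Polynomial ℤ) else 0)).det = 1 - X ^ (n + 1) := by
  haveI : Fact (1 < n + 1) := ⟨by omega⟩
  have h1 : (1 : ZMod (n + 1)) ≠ 0 := one_ne_zero
  set M : Matrix (ZMod (n + 1)) (ZMod (n + 1)) (Polynomial ℤ) :=
    (1 : Matrix (ZMod (n + 1)) (ZMod (n + 1)) (Polynomial ℤ))
      - (X : Polynomial ℤ) • (Matrix.of fun i j : ZMod (n + 1) =>
          if j = i - 1 then (1 : Polynomial ℤ) else 0) with hM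
  have hAd : ∀ i : ZMod (n + 1), M i i = 1 := by
    intro i
    have : ¬ (i = i - 1) := by
      rw [eq_sub_iff_add_eq]
      intro h
      exact h1 (add_eq_left.mp h)
    simp [hM, Matrix.sub_apply, Matrix.smul_apply, Matrix.one_apply, this]
  have hAe : ∀ i : ZMod (n + 1), M (i + 1) i = -X := by
    intro i
    have h2 : ¬ (i + 1 = i) := fun h => h1 (add_eq_left.mp h)
    have h3 : i = (i + 1) - 1 := by ring
    simp [hM, Matrix.sub_apply, Matrix.smul_apply, Matrix.one_apply, h2, ← h3]
  have hA0 : ∀ i j : ZMod (n + 1), j ≠ i → j ≠ i + 1 → M j i = 0 := by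
    intro i j hji hji1
    have h2 : ¬ (i = j - 1) := by
      rw [eq_sub_iff_add_eq]
      intro h
      exact hji1 h.symm
    simp [hM, Matrix.sub_apply, Matrix.smul_apply, Matrix.one_apply, hji, h2]
  have hsign : Equiv.Perm.sign (Equiv.addRight (1 : ZMod (n + 1))) = (-1) ^ n := by
    have h : (Equiv.addRight (1 : ZMod (n + 1))) = (finRotate (n + 1)) := by
      ext i; exact (finRotate_succ_apply i).symm
    rw [h]; have hs := sign_finRotate (n + 1); simp only [Nat.add_sub_cancel] at hs; exact hs
  have hne : (1 : Equiv.Perm (ZMod (n + 1))) ≠ Equiv.addRight 1 := by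
    intro h
    rw [Equiv.ext_iff] at h
    have := h 0
    simp at this
  rw [Matrix.det_apply]
  rw [← Finset.sum_subset
      (Finset.subset_univ ({1, Equiv.addRight 1} : Finset (Equiv.Perm (ZMod (n + 1)))))
      (by
        intro σ _ hσ
        simp only [Finset.mem_insert, Finset.mem_singleton] at hσ
        push_neg at hσ
        have hnotall : ¬ ∀ i, σ i = i ∨ σ i = i + 1 := by
          intro hforall
          rcases perm_char18 n h1 σ hforall with h | h
          · exact hσ.1 h
          · exact hσ.2 h
        push_neg at hnotall
        obtain ⟨i, hi1, hi2⟩ := hnotall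
        have hz : ∏ k : ZMod (n + 1), M (σ k) k = 0 :=
          Finset.prod_eq_zero (Finset.mem_univ i) (hA0 i (σ i) hi1 hi2)
        rw [hz, smul_zero])]
  rw [Finset.sum_pair hne]
  have hterm1 : Equiv.Perm.sign (1 : Equiv.Perm (ZMod (n + 1)))
      • ∏ i : ZMod (n + 1), M ((1 : Equiv.Perm (ZMod (n + 1))) i) i = 1 := by
    simp [hAd]
  have hterm2 : Equiv.Perm.sign (Equiv.addRight (1 : ZMod (n + 1)))
      • ∏ i : ZMod (n + 1), M ((Equiv.addRight (1 : ZMod (n + 1))) i) i = -X ^ (n + 1) := by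
    have hprod : ∏ i : ZMod (n + 1), M ((Equiv.addRight (1 : ZMod (n + 1))) i) i
        = (-X : Polynomial ℤ) ^ (n + 1) := by
      have : ∀ i : ZMod (n + 1), M ((Equiv.addRight (1 : ZMod (n + 1))) i) i = -X := by
        intro i
        simpa using hAe i
      rw [Finset.prod_congr rfl (fun i _ => this i), Finset.prod_const,
        Finset.card_univ, ZMod.card]
    rw [hprod, hsign]
    rcases Nat.even_or_odd n with he | ho
    · have hodd : Odd (n + 1) := Even.add_one he
      rw [he.neg_one_pow, one_smul, hodd.neg_pow]
    · have heven : Even (n + 1) := Odd.add_one ho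
      rw [ho.neg_one_pow, heven.neg_pow]
      rw [show ((-1 : ℤˣ)) • (X : Polynomial ℤ) ^ (n + 1) = -(X ^ (n + 1)) by
        rw [Units.neg_smul, one_smul]]
  rw [hterm1, hterm2, ← sub_eq_add_neg]

/-- STATEMENT 18: for the adjacency matrix `c` of the doubled cycle (affine `A_n`) quiver,
`det(1 − X·c + X²·1) = (1 − X^{n+1})²` in `ℤ[X]`. -/
theorem stmt_18 (n : ℕ) (hn : 2 ≤ n)
    (c : Matrix (ZMod (n + 1)) (ZMod (n + 1)) (Polynomial ℤ))
    (hc : ∀ i j : ZMod (n + 1), c i j = if j = i + 1 ∨ j = i - 1 then 1 else 0) :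
    Matrix.det
      ((1 : Matrix (ZMod (n + 1)) (ZMod (n + 1)) (Polynomial ℤ)) - (Polynomial.X : Polynomial ℤ) • c
        + ((Polynomial.X : Polynomial ℤ) ^ 2) • (1 : Matrix (ZMod (n + 1)) (ZMod (n + 1)) (Polynomial ℤ)))
      = (1 - Polynomial.X ^ (n + 1)) ^ 2 := by
  haveI : Fact (1 < n + 1) := ⟨by omega⟩
  set Q : Matrix (ZMod (n + 1)) (ZMod (n + 1)) (Polynomial ℤ) :=
    Matrix.of fun i j : ZMod (n + 1) => if j = i - 1 then (1 : Polynomial ℤ) else 0 with hQ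
  set P : Matrix (ZMod (n + 1)) (ZMod (n + 1)) (Polynomial ℤ) :=
    Matrix.of fun i j : ZMod (n + 1) => if j = i + 1 then (1 : Polynomial ℤ) else 0 with hP
  have hPQ : Qᵀ = P := by
    ext i j
    have hiff : (i = j - 1) ↔ (j = i + 1) := by
      rw [eq_sub_iff_add_eq, eq_comm]
    simp only [hP, hQ, Matrix.transpose_apply, Matrix.of_apply]
    rw [if_congr hiff rfl rfl]
  have hQP : Q * P = 1 := by
    ext i j
    simp only [hP, hQ, Matrix.mul_apply, Matrix.of_apply, ite_mul, one_mul, zero_mul]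
    rw [Finset.sum_ite_eq' Finset.univ (i - 1)
      (fun k => if j = k + 1 then (1 : Polynomial ℤ) else 0)]
    simp [Matrix.one_apply, sub_add_cancel, eq_comm]
  have hne2 : ∀ i : ZMod (n + 1), (i + 1 : ZMod (n + 1)) ≠ i - 1 := by
    intro i he
    have h2' : ((2 : ℕ) : ZMod (n + 1)) = 0 := by
      push_cast
      linear_combination he
    rw [ZMod.natCast_eq_zero_iff] at h2'
    have := Nat.le_of_dvd (by norm_num) h2'
    omega
  have hc' : c = P + Q := by
    ext i j
    rw [hc i j, Matrix.add_apply]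
    by_cases h1 : j = i + 1
    · by_cases h2 : j = i - 1
      · exact absurd (h1 ▸ h2) (hne2 i)
      · simp [hP, hQ, h1, h2, hne2 i]
    · by_cases h2 : j = i - 1 <;> simp [hP, hQ, h1, h2, (hne2 i).symm]
  have hM : (1 : Matrix (ZMod (n + 1)) (ZMod (n + 1)) (Polynomial ℤ))
      - (Polynomial.X : Polynomial ℤ) • c
      + ((Polynomial.X : Polynomial ℤ) ^ 2) • (1 : Matrix (ZMod (n + 1)) (ZMod (n + 1)) (Polynomial ℤ))
      = (1 - (X : Polynomial ℤ) • Q) * (1 - (X : Polynomial ℤ) • Q)ᵀ := by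
    rw [Matrix.transpose_sub, Matrix.transpose_one, Matrix.transpose_smul, hPQ]
    rw [hc', smul_add, mul_sub, mul_one, sub_mul, one_mul, Matrix.smul_mul,
      Matrix.mul_smul, hQP, smul_smul, ← sq]
    abel
  rw [hM, Matrix.det_mul, Matrix.det_transpose, det_aux18 n hn, ← sq]
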